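/- Let X, Y be N×N positive semi-definite Hermitian matrices with eigenvalues in descending order. Then det(X + Y) ≥ ∏_{k=1}^N (λ_k(X) + λ_k(Y)). -/

import Mathlib

open Matrix BigOperators ComplexOrder

section FiedlerAux

open Finset




lemma fied_abel_aux (t d : ℕ → ℝ) (n : ℕ) (ht : ∀ i, i + 1 ≤ n → t i ≤ t (i + 1))
    (hD : ∀ k, k ≤ n → 0 ≤ ∑ i ∈ range k, d i) :
    ∑ i ∈ range (n + 1), t i * d i ≤ t n * ∑ i ∈ range (n + 1), d i := by
  induction n with
  | zero => simp
  | succ n ih =>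
    have h1 := ih (fun i hi => ht i (by omega)) (fun k hk => hD k (by omega))
    have h2 : t n ≤ t (n + 1) := ht n (by omega)
    have h3 : 0 ≤ ∑ i ∈ range (n + 1), d i := hD _ (by omega)
    calc ∑ i ∈ range (n + 2), t i * d i
        = ∑ i ∈ range (n + 1), t i * d i + t (n + 1) * d (n + 1) := by rw [sum_range_succ]
      _ ≤ t n * ∑ i ∈ range (n + 1), d i + t (n + 1) * d (n + 1) := by linarith
      _ ≤ t (n + 1) * ∑ i ∈ range (n + 1), d i + t (n + 1) * d (n + 1) := by nlinarith
      _ = t (n + 1) * ∑ i ∈ range (n + 2), d i := by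
          conv_rhs => rw [sum_range_succ]
          ring

lemma fied_abel (t d : ℕ → ℝ) (n : ℕ) (ht : ∀ i, i + 1 < n → t i ≤ t (i + 1))
    (hD : ∀ k, k ≤ n → 0 ≤ ∑ i ∈ range k, d i) (htot : ∑ i ∈ range n, d i = 0) :
    ∑ i ∈ range n, t i * d i ≤ 0 := by
  cases n with
  | zero => simp
  | succ m =>
    have := fied_abel_aux t d m (fun i hi => ht i (by omega)) (fun k hk => hD k (by omega))
    rw [htot, mul_zero] at this
    exact this

lemma fied_maj_prod (n : ℕ) (m c : ℕ → ℝ)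
    (hmono : ∀ i j, i ≤ j → j < n → m j ≤ m i)
    (hm0 : ∀ i, i < n → 0 ≤ m i) (hc0 : ∀ i, i < n → 0 ≤ c i)
    (hpart : ∀ k, k ≤ n → ∑ i ∈ range k, m i ≤ ∑ i ∈ range k, c i)
    (htot : ∑ i ∈ range n, m i = ∑ i ∈ range n, c i) :
    ∏ i ∈ range n, c i ≤ ∏ i ∈ range n, m i := by
  rcases Nat.eq_zero_or_pos n with hn | hn
  · simp [hn]
  obtain ⟨p, rfl⟩ : ∃ p, n = p + 1 := ⟨n - 1, by omega⟩
  by_cases hpos : ∀ i, i < p + 1 → 0 < c i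
  · have hlast : c p ≤ m p := by
      have h1 := hpart p (by omega)
      rw [sum_range_succ, sum_range_succ] at htot
      linarith
    have hmpos : ∀ i, i < p + 1 → 0 < m i := by
      intro i hi
      have h1 := hmono i p (by omega) (by omega)
      have h2 := hpos p (by omega)
      linarith
    have key : ∑ i ∈ range (p + 1), Real.log (c i) ≤ ∑ i ∈ range (p + 1), Real.log (m i) := by
      have step : ∑ i ∈ range (p + 1), (Real.log (c i) - Real.log (m i))
          ≤ ∑ i ∈ range (p + 1), (m i)⁻¹ * (c i - m i) := by
        apply sum_le_sum
        intro i hi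
        rw [mem_range] at hi
        have hmi := hmpos i hi
        have hci := hpos i hi
        have hlog : Real.log (c i / m i) ≤ c i / m i - 1 :=
          Real.log_le_sub_one_of_pos (by positivity)
        rw [Real.log_div (ne_of_gt hci) (ne_of_gt hmi)] at hlog
        have heq : c i / m i - 1 = (m i)⁻¹ * (c i - m i) := by field_simp
        linarith [heq ▸ hlog]
      have abel : ∑ i ∈ range (p + 1), (fun i => (m i)⁻¹) i * (fun i => c i - m i) i ≤ 0 := by
        apply fied_abel _ _ (p + 1)
        · intro i hi
          exact inv_anti₀ (hmpos (i + 1) (by omega)) (hmono i (i + 1) (by omega) (by omega))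
        · intro k hk
          have := hpart k hk
          rw [sum_sub_distrib]
          linarith
        · rw [sum_sub_distrib]; linarith
      simp only at abel
      have h5 : ∑ i ∈ range (p + 1), (Real.log (c i) - Real.log (m i)) ≤ 0 := le_trans step abel
      rw [sum_sub_distrib] at h5
      linarith
    calc ∏ i ∈ range (p + 1), c i = Real.exp (∑ i ∈ range (p + 1), Real.log (c i)) := by
          rw [Real.exp_sum]
          exact (prod_congr rfl fun i hi => (Real.exp_log (hpos i (mem_range.1 hi))).symm)
      _ ≤ Real.exp (∑ i ∈ range (p + 1), Real.log (m i)) := Real.exp_le_exp.2 key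
      _ = ∏ i ∈ range (p + 1), m i := by
          rw [Real.exp_sum]
          exact prod_congr rfl fun i hi => Real.exp_log (hmpos i (mem_range.1 hi))
  · push_neg at hpos
    obtain ⟨i, hi, hci⟩ := hpos
    have hz : c i = 0 := le_antisymm hci (hc0 i hi)
    calc ∏ i ∈ range (p + 1), c i = 0 := prod_eq_zero (mem_range.2 hi) hz
      _ ≤ ∏ i ∈ range (p + 1), m i := prod_nonneg fun j hj => hm0 j (mem_range.1 hj)

lemma fied_lp (n k : ℕ) (hk : k ≤ n) (a c : ℕ → ℝ)
    (ha : ∀ i j, i ≤ j → j < n → a j ≤ a i)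
    (hc0 : ∀ i, i < n → 0 ≤ c i) (hc1 : ∀ i, i < n → c i ≤ 1)
    (hsum : ∑ i ∈ range n, c i = k) :
    ∑ i ∈ range n, c i * a i ≤ ∑ i ∈ range k, a i := by
  rcases Nat.eq_zero_or_pos k with rfl | hkpos
  · have hz : ∀ i ∈ range n, c i = 0 :=
      (sum_eq_zero_iff_of_nonneg (fun j hj => hc0 j (mem_range.1 hj))).1 (by simpa using hsum)
    simp only [range_zero, sum_empty]
    rw [sum_congr rfl (fun i hi => by rw [hz i hi, zero_mul])]
    simp
  · set t := a (k - 1) with htdef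
    set e : ℕ → ℝ := fun i => if i < k then 1 else 0 with he
    have hfilter : (range n).filter (fun i => i < k) = range k := by
      ext x; simp only [mem_filter, mem_range]; omega
    have hesum : ∑ i ∈ range n, e i = (k : ℝ) := by
      simp only [he, ← sum_filter, hfilter, sum_const, nsmul_eq_mul, mul_one, card_range]
    have hea : ∑ i ∈ range n, e i * a i = ∑ i ∈ range k, a i := by
      simp only [he, ite_mul, one_mul, zero_mul, ← sum_filter, hfilter]
    have key : ∀ i ∈ range n, c i * a i ≤ e i * a i + (c i - e i) * t := by
      intro i hi
      rw [mem_range] at hi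
      by_cases h : i < k
      · have h1 : c i ≤ 1 := hc1 i hi
        have h2 : t ≤ a i := ha i (k - 1) (by omega) (by omega)
        simp only [he, if_pos h]
        nlinarith
      · have h1 : 0 ≤ c i := hc0 i hi
        have h2 : a i ≤ t := ha (k - 1) i (by omega) hi
        simp only [he, if_neg h]
        nlinarith
    calc ∑ i ∈ range n, c i * a i ≤ ∑ i ∈ range n, (e i * a i + (c i - e i) * t) := sum_le_sum key
      _ = ∑ i ∈ range n, e i * a i + (∑ i ∈ range n, c i - ∑ i ∈ range n, e i) * t := by
          rw [sum_add_distrib]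
          congr 1
          rw [← sum_mul, sum_sub_distrib]
      _ = ∑ i ∈ range k, a i := by rw [hea, hesum, hsum]; ring

variable {N : ℕ}

noncomputable def mulVecE (X : Matrix (Fin N) (Fin N) ℂ) (u : EuclideanSpace ℂ (Fin N)) :
    EuclideanSpace ℂ (Fin N) := WithLp.toLp 2 (X.mulVec u)

lemma fied_adj (X : Matrix (Fin N) (Fin N) ℂ) (hX : X.IsHermitian)
    (a b : EuclideanSpace ℂ (Fin N)) :
    inner (𝕜 := ℂ) (mulVecE X a) b = inner (𝕜 := ℂ) a (mulVecE X b) :=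
  (Matrix.isHermitian_iff_isSymmetric.1 hX) a b

lemma fied_expand (X : Matrix (Fin N) (Fin N) ℂ) (hX : X.IsHermitian)
    (u : EuclideanSpace ℂ (Fin N)) :
    (inner (𝕜 := ℂ) u (mulVecE X u)).re
      = ∑ j, hX.eigenvalues j * ‖(inner (𝕜 := ℂ) (hX.eigenvectorBasis j) u : ℂ)‖ ^ 2 := by
  set W := hX.eigenvectorBasis with hW
  have hrepr : ∀ j, W.repr u j = inner (𝕜 := ℂ) (W j) u := fun j => W.repr_apply_apply u j
  have hu : ∑ j, W.repr u j • W j = u := W.sum_repr u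
  have step1 : ∀ w : EuclideanSpace ℂ (Fin N), (inner (𝕜 := ℂ) u w : ℂ)
      = ∑ j, (starRingEnd ℂ) (W.repr u j) * inner (𝕜 := ℂ) (W j) w := by
    intro w
    conv_lhs => rw [← hu]
    rw [sum_inner]
    exact Finset.sum_congr rfl fun j _ => inner_smul_left _ _ _
  have step2 : ∀ j, (inner (𝕜 := ℂ) (W j) (mulVecE X u) : ℂ)
      = (hX.eigenvalues j : ℂ) * (inner (𝕜 := ℂ) (W j) u : ℂ) := by
    intro j
    rw [← fied_adj X hX]
    have hmv : mulVecE X (W j) = hX.eigenvalues j • (W j : EuclideanSpace ℂ (Fin N)) :=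
      congrArg (WithLp.toLp 2) (hX.mulVec_eigenvectorBasis j)
    rw [hmv, RCLike.real_smul_eq_coe_smul (K := ℂ), inner_smul_left, RCLike.conj_ofReal]
    norm_cast
  rw [step1 (mulVecE X u), Complex.re_sum]
  refine Finset.sum_congr rfl fun j _ => ?_
  rw [step2 j, hrepr j]
  set c : ℂ := inner (𝕜 := ℂ) (W j) u
  have key : (starRingEnd ℂ) c * ((hX.eigenvalues j : ℂ) * c)
      = ((hX.eigenvalues j * ‖c‖ ^ 2 : ℝ) : ℂ) := by
    have h1 : (starRingEnd ℂ) c * ((hX.eigenvalues j : ℂ) * c)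
        = (hX.eigenvalues j : ℂ) * (c * (starRingEnd ℂ) c) := by ring
    rw [h1, Complex.mul_conj']
    push_cast
    ring
  rw [key, Complex.ofReal_re]

lemma fied_parseval (X : Matrix (Fin N) (Fin N) ℂ) (hX : X.IsHermitian)
    (u : EuclideanSpace ℂ (Fin N)) (hu : ‖u‖ = 1) :
    ∑ j, ‖(inner (𝕜 := ℂ) (hX.eigenvectorBasis j) u : ℂ)‖ ^ 2 = 1 := by
  set W := hX.eigenvectorBasis with hW
  have h1 : ∀ j, W.repr u j = inner (𝕜 := ℂ) (W j) u := fun j => W.repr_apply_apply u j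
  have h2 : ‖W.repr u‖ = ‖u‖ := W.repr.norm_map u
  have h3 : ‖W.repr u‖ ^ 2 = ∑ j, ‖W.repr u j‖ ^ 2 := by
    rw [EuclideanSpace.norm_eq]
    rw [Real.sq_sqrt (by positivity)]
  rw [← Finset.sum_congr rfl fun j _ => by rw [← h1 j]]
  rw [← h3, h2, hu, one_pow]

lemma fied_trace (X : Matrix (Fin N) (Fin N) ℂ) (hX : X.IsHermitian) :
    X.trace = ∑ i, (hX.eigenvalues i : ℂ) := by
  exact hX.trace_eq_sum_eigenvalues

lemma fied_filter_sum (k : ℕ) (hk : k ≤ N) (f : Fin N → ℝ) :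
    ∑ i ∈ univ.filter (fun i : Fin N => (i : ℕ) < k), f i
      = ∑ i ∈ range k, (fun j => if h : j < N then f ⟨j, h⟩ else 0) i := by
  rw [Finset.sum_filter]
  have h1 : ∀ i : Fin N, (if (i : ℕ) < k then f i else 0)
      = (fun j => if h : j < N then (if j < k then f ⟨j, h⟩ else 0) else 0) (i : ℕ) := by
    intro i
    simp only [dif_pos i.isLt]
  rw [Finset.sum_congr rfl fun i _ => h1 i]
  rw [Fin.sum_univ_eq_sum_range (fun j => if h : j < N then (if j < k then f ⟨j, h⟩ else 0) else 0) N]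
  rw [← Finset.sum_subset (Finset.range_subset_range.2 hk)
    (by intro x hx hnx; simp only [Finset.mem_range] at hx hnx ⊢
        rw [dif_pos hx, if_neg]; omega)]
  refine Finset.sum_congr rfl fun i hi => ?_
  rw [Finset.mem_range] at hi
  simp only [dif_pos (show i < N by omega), if_pos hi]

lemma fied_card_aux (k : ℕ) (hk : k ≤ N) :
    ∑ i ∈ univ.filter (fun i : Fin N => (i : ℕ) < k), (1 : ℝ) = (k : ℝ) := by
  rw [fied_filter_sum k hk (fun _ => (1 : ℝ))]
  rw [Finset.sum_congr rfl fun i hi => dif_pos (lt_of_lt_of_le (Finset.mem_range.1 hi) hk)]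
  simp

lemma fied_kyfan (X : Matrix (Fin N) (Fin N) ℂ) (hX : X.IsHermitian)
    (lam : Fin N → ℝ) (s : Equiv.Perm (Fin N))
    (hlam : ∀ i, lam i = hX.eigenvalues (s i)) (hdesc : Antitone lam)
    (v : Fin N → EuclideanSpace ℂ (Fin N)) (hv : Orthonormal ℂ v)
    (k : ℕ) (hk : k ≤ N) :
    ∑ i ∈ univ.filter (fun i : Fin N => (i : ℕ) < k),
        (inner (𝕜 := ℂ) (v i) (mulVecE X (v i))).re
      ≤ ∑ i ∈ univ.filter (fun i : Fin N => (i : ℕ) < k), lam i := by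
  classical
  set W := hX.eigenvectorBasis with hW
  set S := univ.filter (fun i : Fin N => (i : ℕ) < k) with hS
  set C : Fin N → ℝ := fun j => ∑ i ∈ S, ‖(inner (𝕜 := ℂ) (W j) (v i) : ℂ)‖ ^ 2 with hC
  have hLHS : ∑ i ∈ S, (inner (𝕜 := ℂ) (v i) (mulVecE X (v i))).re
      = ∑ j, hX.eigenvalues j * C j := by
    rw [Finset.sum_congr rfl fun i _ => fied_expand X hX (v i)]
    rw [Finset.sum_comm]
    exact Finset.sum_congr rfl fun j _ => by rw [hC, Finset.mul_sum]
  have hC0 : ∀ j, 0 ≤ C j := fun j => Finset.sum_nonneg fun i _ => by positivity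
  have hC1 : ∀ j, C j ≤ 1 := by
    intro j
    have hb := hv.sum_inner_products_le (s := S) (W j)
    have hnorm : ‖(W j : EuclideanSpace ℂ (Fin N))‖ = 1 := W.orthonormal.1 j
    calc C j = ∑ i ∈ S, ‖(inner (𝕜 := ℂ) (v i) (W j) : ℂ)‖ ^ 2 :=
        Finset.sum_congr rfl fun i _ => by rw [← norm_inner_symm]
      _ ≤ ‖(W j : EuclideanSpace ℂ (Fin N))‖ ^ 2 := hb
      _ = 1 := by rw [hnorm, one_pow]
  have hCsum : ∑ j, C j = (k : ℝ) := by
    rw [hC]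
    rw [Finset.sum_comm]
    rw [Finset.sum_congr rfl fun i (hi : i ∈ S) => fied_parseval X hX (v i) (hv.1 i)]
    exact fied_card_aux k hk
  have hperm : ∑ j, hX.eigenvalues j * C j = ∑ j, lam j * C (s j) := by
    rw [← Equiv.sum_comp s (fun j => hX.eigenvalues j * C j)]
    exact Finset.sum_congr rfl fun j _ => by rw [hlam j]
  set a' : ℕ → ℝ := fun i => if h : i < N then lam ⟨i, h⟩ else 0 with ha'
  set c' : ℕ → ℝ := fun i => if h : i < N then C (s ⟨i, h⟩) else 0 with hc'
  have hlhs2 : ∑ j, lam j * C (s j) = ∑ i ∈ range N, c' i * a' i := by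
    rw [← Fin.sum_univ_eq_sum_range (fun i => c' i * a' i) N]
    refine Finset.sum_congr rfl fun j _ => ?_
    simp only [ha', hc', dif_pos j.isLt, Fin.eta]
    ring
  have hrhs2 : ∑ i ∈ S, lam i = ∑ i ∈ range k, a' i := by
    rw [hS, fied_filter_sum k hk lam]
  rw [hLHS, hperm, hlhs2, hrhs2]
  apply fied_lp N k hk
  · intro i j hij hj
    simp only [ha', dif_pos hj, dif_pos (lt_of_le_of_lt hij hj)]
    exact hdesc (show (⟨i, lt_of_le_of_lt hij hj⟩ : Fin N) ≤ ⟨j, hj⟩ from hij)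
  · intro i hi
    simp only [hc', dif_pos hi]
    exact hC0 _
  · intro i hi
    simp only [hc', dif_pos hi]
    exact hC1 _
  · rw [← Fin.sum_univ_eq_sum_range c' N]
    rw [Finset.sum_congr rfl fun (j : Fin N) _ => show c' ↑j = C (s j) by
      simp only [hc', dif_pos j.isLt, Fin.eta]]
    rw [Equiv.sum_comp s C]
    exact hCsum

end FiedlerAux

theorem stmt_17 {N : ℕ} (X Y : Matrix (Fin N) (Fin N) ℂ)
    (hX : X.PosSemidef) (hY : Y.PosSemidef)
    (lamX lamY : Fin N → ℝ) (sX sY : Equiv.Perm (Fin N))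
    (hlamX : ∀ i, lamX i = hX.1.eigenvalues (sX i))
    (hlamY : ∀ i, lamY i = hY.1.eigenvalues (sY i))
    (hX_desc : Antitone lamX) (hY_desc : Antitone lamY) :
    ((∏ k : Fin N, (lamX k + lamY k) : ℝ) : ℂ) ≤ (X + Y).det := by
  classical
  have hMpsd : (X + Y).PosSemidef := hX.add hY
  have hMh : (X + Y).IsHermitian := hMpsd.1
  set ν : Fin N → ℝ := hMh.eigenvalues with hν
  set σ : Equiv.Perm (Fin N) := Tuple.sort (fun i => -ν i) with hσ
  have hanti : Antitone (fun i : Fin N => ν (σ i)) := by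
    intro i j hij
    have h := Tuple.monotone_sort (fun i => -ν i) hij
    simp only [Function.comp_apply, ← hσ] at h
    simp only [neg_le_neg_iff] at h
    linarith
  have hdet : (X + Y).det = ((∏ i, ν i : ℝ) : ℂ) := by
    rw [hMh.det_eq_prod_eigenvalues]
    push_cast
    rfl
  rw [hdet, Complex.real_le_real]
  -- setup eigenvectors of X + Y sorted descending
  set W : OrthonormalBasis (Fin N) ℂ (EuclideanSpace ℂ (Fin N)) := hMh.eigenvectorBasis with hWdef
  set v : Fin N → EuclideanSpace ℂ (Fin N) := fun i => W (σ i) with hvdef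
  have hvon : Orthonormal ℂ v := W.orthonormal.comp σ σ.injective
  have hMvi : ∀ i, (inner (𝕜 := ℂ) (v i) (mulVecE (X + Y) (v i))).re = ν (σ i) := by
    intro i
    have h1 : mulVecE (X + Y) (v i) = ν (σ i) • v i := congrArg (WithLp.toLp 2) (hMh.mulVec_eigenvectorBasis (σ i))
    rw [h1, RCLike.real_smul_eq_coe_smul (K := ℂ), inner_smul_real_right,
      inner_self_eq_norm_sq_to_K, hvon.1 i]
    norm_num
  have hsplit : ∀ u : EuclideanSpace ℂ (Fin N),
      (inner (𝕜 := ℂ) u (mulVecE (X + Y) u)).re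
        = (inner (𝕜 := ℂ) u (mulVecE X u)).re + (inner (𝕜 := ℂ) u (mulVecE Y u)).re := by
    intro u
    have h2 : mulVecE (X + Y) u = mulVecE X u + mulVecE Y u := congrArg (WithLp.toLp 2) (Matrix.add_mulVec X Y u)
    rw [h2, inner_add_right, Complex.add_re]
  set mseq : ℕ → ℝ := fun i => if h : i < N then ν (σ ⟨i, h⟩) else 0 with hmseq
  set cseq : ℕ → ℝ := fun i => if h : i < N then lamX ⟨i, h⟩ + lamY ⟨i, h⟩ else 0 with hcseq
  have hconvm : ∀ k, k ≤ N → ∑ i ∈ Finset.univ.filter (fun i : Fin N => (i : ℕ) < k), ν (σ i)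
      = ∑ i ∈ Finset.range k, mseq i := by
    intro k hk
    rw [fied_filter_sum k hk (fun i => ν (σ i))]
  have hconvc : ∀ k, k ≤ N → ∑ i ∈ Finset.univ.filter (fun i : Fin N => (i : ℕ) < k),
        (lamX i + lamY i) = ∑ i ∈ Finset.range k, cseq i := by
    intro k hk
    rw [fied_filter_sum k hk (fun i => lamX i + lamY i)]
  -- Ky Fan partial sum inequalities
  have hpart : ∀ k, k ≤ N → ∑ i ∈ Finset.range k, mseq i ≤ ∑ i ∈ Finset.range k, cseq i := by
    intro k hk
    rw [← hconvm k hk, ← hconvc k hk]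
    have hXky := fied_kyfan X hX.1 lamX sX hlamX hX_desc v hvon k hk
    have hYky := fied_kyfan Y hY.1 lamY sY hlamY hY_desc v hvon k hk
    calc ∑ i ∈ Finset.univ.filter (fun i : Fin N => (i : ℕ) < k), ν (σ i)
        = ∑ i ∈ Finset.univ.filter (fun i : Fin N => (i : ℕ) < k),
            ((inner (𝕜 := ℂ) (v i) (mulVecE X (v i))).re
              + (inner (𝕜 := ℂ) (v i) (mulVecE Y (v i))).re) := by
          refine Finset.sum_congr rfl fun i _ => ?_
          rw [← hsplit (v i), hMvi i]
      _ = (∑ i ∈ Finset.univ.filter (fun i : Fin N => (i : ℕ) < k),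
            (inner (𝕜 := ℂ) (v i) (mulVecE X (v i))).re)
          + ∑ i ∈ Finset.univ.filter (fun i : Fin N => (i : ℕ) < k),
            (inner (𝕜 := ℂ) (v i) (mulVecE Y (v i))).re := Finset.sum_add_distrib
      _ ≤ (∑ i ∈ Finset.univ.filter (fun i : Fin N => (i : ℕ) < k), lamX i)
          + ∑ i ∈ Finset.univ.filter (fun i : Fin N => (i : ℕ) < k), lamY i :=
            add_le_add hXky hYky
      _ = ∑ i ∈ Finset.univ.filter (fun i : Fin N => (i : ℕ) < k), (lamX i + lamY i) :=
            Finset.sum_add_distrib.symm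
  -- total sums are equal (trace)
  have hsum_eq : ∑ i, ν i = (∑ i, hX.1.eigenvalues i) + ∑ i, hY.1.eigenvalues i := by
    have h : (∑ i, (ν i : ℂ)) = (∑ i, (hX.1.eigenvalues i : ℂ)) + ∑ i, (hY.1.eigenvalues i : ℂ) := by
      rw [← fied_trace (X + Y) hMh, ← fied_trace X hX.1, ← fied_trace Y hY.1]
      exact Matrix.trace_add X Y
    exact_mod_cast h
  have htot : ∑ i ∈ Finset.range N, mseq i = ∑ i ∈ Finset.range N, cseq i := by
    have h1 : ∑ i ∈ Finset.range N, mseq i = ∑ i, ν (σ i) := by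
      rw [← Fin.sum_univ_eq_sum_range mseq N]
      exact Finset.sum_congr rfl fun i _ => by simp only [hmseq, dif_pos i.isLt, Fin.eta]
    have h2 : ∑ i ∈ Finset.range N, cseq i = ∑ i, (lamX i + lamY i) := by
      rw [← Fin.sum_univ_eq_sum_range cseq N]
      exact Finset.sum_congr rfl fun i _ => by simp only [hcseq, dif_pos i.isLt, Fin.eta]
    rw [h1, h2, Equiv.sum_comp σ ν, Finset.sum_add_distrib]
    rw [Finset.sum_congr rfl fun i _ => hlamX i, Finset.sum_congr rfl fun i _ => hlamY i]
    rw [Equiv.sum_comp sX, Equiv.sum_comp sY]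
    exact hsum_eq
  have key : ∏ i ∈ Finset.range N, cseq i ≤ ∏ i ∈ Finset.range N, mseq i := by
    apply fied_maj_prod N
    · intro i j hij hj
      simp only [hmseq, dif_pos hj, dif_pos (lt_of_le_of_lt hij hj)]
      exact hanti (show (⟨i, lt_of_le_of_lt hij hj⟩ : Fin N) ≤ ⟨j, hj⟩ from hij)
    · intro i hi
      simp only [hmseq, dif_pos hi]
      exact hMpsd.eigenvalues_nonneg _
    · intro i hi
      simp only [hcseq, dif_pos hi]
      have h1 := hX.eigenvalues_nonneg (sX ⟨i, hi⟩)
      have h2 := hY.eigenvalues_nonneg (sY ⟨i, hi⟩)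
      rw [hlamX, hlamY]
      linarith
    · exact hpart
    · exact htot
  have hp1 : ∏ i ∈ Finset.range N, cseq i = ∏ k, (lamX k + lamY k) := by
    rw [← Fin.prod_univ_eq_prod_range cseq N]
    exact Finset.prod_congr rfl fun i _ => by simp only [hcseq, dif_pos i.isLt, Fin.eta]
  have hp2 : ∏ i ∈ Finset.range N, mseq i = ∏ i, ν i := by
    rw [← Fin.prod_univ_eq_prod_range mseq N]
    rw [Finset.prod_congr rfl fun (i : Fin N) _ =>
      show mseq ↑i = ν (σ i) by simp only [hmseq, dif_pos i.isLt, Fin.eta]]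
    exact Equiv.prod_comp σ ν
  rw [← hp1, ← hp2]
  exact key
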